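/- Fix e ≥ 3 and I = Z/eZ. Let S⁺ = (j, j+1, ..., j+a-1) and S⁻ = (k, k-1, ..., k-b+1), and let i ∈ Shuf(S⁺,S⁻). Then the set M = {m : 1 ≤ m ≤ a+b-1, i_m = i_{m+1}} of positions fixing i under the corresponding simple transposition satisfies: any two distinct elements m, m' of M have |m - m'| ≥ 2. Consequently the subgroup H(i) = ⟨s_m : m ∈ M⟩ of S_{a+b} is an elementary abelian 2-group of order 2^{|M|}. -/

import Mathlib

/-- For a shuffle `i` of `S⁺ = (j, ..., j+a-1)` and `S⁻ = (k, ..., k-b+1)` in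
`ℤ/eℤ` (e ≥ 3), the set `M` of positions `m` with `i m = i (m+1)` contains no
two consecutive integers; consequently the subgroup `H(i) = ⟨s_m : m ∈ M⟩` is an
elementary abelian 2-group of order `2^|M|`. -/
theorem shuffle_stabilizer_elementary_abelian (e a b : ℕ) (he : 3 ≤ e) (j k : ZMod e)
    (σ : Equiv.Perm ℕ)
    (hfix : ∀ x, a + b ≤ x → σ x = x)
    (harm : ∀ x y, x < y → y < a → σ x < σ y)
    (hleg : ∀ x y, a ≤ x → x < y → y < a + b → σ x < σ y)
    (i : ℕ → ZMod e)
    (hi : i = fun r =>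
      (fun s : ℕ => if s < a then j + (s : ZMod e) else k - ((s - a : ℕ) : ZMod e)) (σ⁻¹ r))
    (M : Set ℕ) (hM : M = {m | m + 1 < a + b ∧ i m = i (m + 1)})
    (H : Subgroup (Equiv.Perm ℕ))
    (hH : H = Subgroup.closure {π | ∃ m ∈ M, π = Equiv.swap m (m + 1)}) :
    (∀ m ∈ M, ∀ m' ∈ M, m < m' → m + 2 ≤ m') ∧
    (∀ h ∈ H, h * h = 1) ∧
    (∀ g ∈ H, ∀ h ∈ H, g * h = h * g) ∧
    Nat.card H = 2 ^ M.ncard := by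
  haveI : NeZero e := ⟨by omega⟩
  -- preimages of positions < a+b are < a+b
  have hainv : ∀ r, r < a + b → σ⁻¹ r < a + b := by
    intro r hr
    by_contra hc
    push_neg at hc
    have h1 : σ (σ⁻¹ r) = σ⁻¹ r := hfix _ hc
    have h2 : σ (σ⁻¹ r) = r := σ.apply_symm_apply r
    omega
  -- two positions at distance ≤ 2, both preimages in the arm, equal values: impossible
  have arm : ∀ r r', r < r' → r' ≤ r + 2 → σ⁻¹ r < a → σ⁻¹ r' < a → i r = i r' → False := by
    intro r r' hlt hle hpa hpa' heq
    have hsp : σ (σ⁻¹ r) = r := σ.apply_symm_apply r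
    have hsp' : σ (σ⁻¹ r') = r' := σ.apply_symm_apply r'
    set p := σ⁻¹ r with hp
    set p' := σ⁻¹ r' with hp'
    have hpp' : p < p' := by
      rcases lt_trichotomy p p' with h | h | h
      · exact h
      · rw [h] at hsp; omega
      · have := harm p' p h hpa; omega
    simp only [hi] at heq
    rw [← hp, ← hp', if_pos hpa, if_pos hpa'] at heq
    have hv : (p : ZMod e) = (p' : ZMod e) := add_left_cancel heq
    have hdvd : e ∣ p' - p := by
      have hz : ((p' - p : ℕ) : ZMod e) = 0 := by
        rw [Nat.cast_sub hpp'.le, ← hv, sub_self]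
      exact (ZMod.natCast_eq_zero_iff _ _).mp hz
    have h3 : p + 3 ≤ p' := by
      have := Nat.le_of_dvd (by omega) hdvd
      omega
    have h1 : σ p < σ (p + 1) := harm _ _ (by omega) (by omega)
    have h2 : σ (p + 1) < σ p' := harm _ _ (by omega) hpa'
    have h4 : σ p < σ (p + 2) := harm _ _ (by omega) (by omega)
    have h5 : σ (p + 2) < σ p' := harm _ _ (by omega) hpa'
    have hne : σ (p + 1) ≠ σ (p + 2) := fun hh => by
      have := σ.injective hh; omega
    omega
  -- same, both in the leg
  have leg : ∀ r r', r < r' → r' ≤ r + 2 → r' < a + b → a ≤ σ⁻¹ r → a ≤ σ⁻¹ r' →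
      i r = i r' → False := by
    intro r r' hlt hle hr'b hpa hpa' heq
    have hsp : σ (σ⁻¹ r) = r := σ.apply_symm_apply r
    have hsp' : σ (σ⁻¹ r') = r' := σ.apply_symm_apply r'
    have hpb' : σ⁻¹ r' < a + b := hainv r' hr'b
    have hpb : σ⁻¹ r < a + b := hainv r (by omega)
    set p := σ⁻¹ r with hp
    set p' := σ⁻¹ r' with hp'
    have hpp' : p < p' := by
      rcases lt_trichotomy p p' with h | h | h
      · exact h
      · rw [h] at hsp; omega
      · have := hleg p' p hpa' h (by omega); omega
    simp only [hi] at heq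
    rw [← hp, ← hp', if_neg (by omega), if_neg (by omega)] at heq
    have hv : ((p - a : ℕ) : ZMod e) = ((p' - a : ℕ) : ZMod e) := sub_right_inj.mp heq
    have hdvd : e ∣ p' - p := by
      have heqn : p' - p = (p' - a) - (p - a) := by omega
      have hz : ((p' - p : ℕ) : ZMod e) = 0 := by
        rw [heqn, Nat.cast_sub (by omega), ← hv, sub_self]
      exact (ZMod.natCast_eq_zero_iff _ _).mp hz
    have h3 : p + 3 ≤ p' := by
      have := Nat.le_of_dvd (by omega) hdvd
      omega
    have h1 : σ p < σ (p + 1) := hleg _ _ hpa (by omega) (by omega)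
    have h2 : σ (p + 1) < σ p' := hleg _ _ (by omega) (by omega) (by omega)
    have h4 : σ p < σ (p + 2) := hleg _ _ hpa (by omega) (by omega)
    have h5 : σ (p + 2) < σ p' := hleg _ _ (by omega) (by omega) (by omega)
    have hne : σ (p + 1) ≠ σ (p + 2) := fun hh => by
      have := σ.injective hh; omega
    omega
  -- no two consecutive elements of M
  have keyM : ∀ m, m ∈ M → m + 1 ∈ M → False := by
    intro m hm hm1
    rw [hM] at hm hm1
    obtain ⟨hb1, e1⟩ := hm
    obtain ⟨hb2, e2⟩ := hm1
    have hb2' : m + 2 < a + b := by omega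
    have e2' : i (m + 1) = i (m + 2) := e2
    by_cases c0 : σ⁻¹ m < a <;> by_cases c1 : σ⁻¹ (m + 1) < a <;>
      by_cases c2 : σ⁻¹ (m + 2) < a
    · exact arm m (m + 1) (by omega) (by omega) c0 c1 e1
    · exact arm m (m + 1) (by omega) (by omega) c0 c1 e1
    · exact arm m (m + 2) (by omega) (by omega) c0 c2 (e1.trans e2')
    · exact leg (m + 1) (m + 2) (by omega) (by omega) hb2' (by omega) (by omega) e2'
    · exact arm (m + 1) (m + 2) (by omega) (by omega) c1 c2 e2'
    · exact leg m (m + 2) (by omega) (by omega) hb2' (by omega) (by omega) (e1.trans e2')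
    · exact leg m (m + 1) (by omega) (by omega) (by omega) (by omega) (by omega) e1
    · exact leg m (m + 1) (by omega) (by omega) (by omega) (by omega) (by omega) e1
  have gap : ∀ m ∈ M, ∀ m' ∈ M, m < m' → m + 2 ≤ m' := by
    intro m hm m' hm' hlt
    by_contra hc
    have : m' = m + 1 := by omega
    subst this
    exact keyM m hm hm'
  -- for distinct m, m' in M the supports {m, m+1}, {m', m'+1} are disjoint
  have disj : ∀ m ∈ M, ∀ m' ∈ M, m ≠ m' →
      m ≠ m' ∧ m ≠ m' + 1 ∧ m + 1 ≠ m' ∧ m + 1 ≠ m' + 1 := by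
    intro m hm m' hm' hne
    rcases lt_or_gt_of_ne hne with h | h
    · have := gap m hm m' hm' h; omega
    · have := gap m' hm' m hm h; omega
  -- structure of every element of H
  have struct : ∀ h ∈ H,
      (∀ m ∈ M, (h m = m ∧ h (m + 1) = m + 1) ∨ (h m = m + 1 ∧ h (m + 1) = m)) ∧
      (∀ x, (∀ m ∈ M, x ≠ m ∧ x ≠ m + 1) → h x = x) := by
    intro h hh
    rw [hH] at hh
    refine Subgroup.closure_induction ?_ ?_ ?_ ?_ hh
    · rintro x ⟨m', hm', rfl⟩
      constructor
      · intro m hm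
        by_cases hmm : m = m'
        · subst hmm
          exact Or.inr ⟨Equiv.swap_apply_left _ _, Equiv.swap_apply_right _ _⟩
        · obtain ⟨d1, d2, d3, d4⟩ := disj m hm m' hm' hmm
          exact Or.inl ⟨Equiv.swap_apply_of_ne_of_ne d1 d2,
            Equiv.swap_apply_of_ne_of_ne d3 d4⟩
      · intro x hx
        obtain ⟨hx1, hx2⟩ := hx m' hm'
        exact Equiv.swap_apply_of_ne_of_ne hx1 hx2
    · exact ⟨fun m _ => Or.inl ⟨rfl, rfl⟩, fun x _ => rfl⟩
    · intro x y hx hy px py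
      constructor
      · intro m hm
        rcases py.1 m hm with ⟨h1, h2⟩ | ⟨h1, h2⟩ <;>
          rcases px.1 m hm with ⟨g1, g2⟩ | ⟨g1, g2⟩
        · exact Or.inl (by simp [Equiv.Perm.mul_apply, h1, h2, g1, g2])
        · exact Or.inr (by simp [Equiv.Perm.mul_apply, h1, h2, g1, g2])
        · exact Or.inr (by simp [Equiv.Perm.mul_apply, h1, h2, g1, g2])
        · exact Or.inl (by simp [Equiv.Perm.mul_apply, h1, h2, g1, g2])
      · intro x' hx'
        simp [Equiv.Perm.mul_apply, py.2 x' hx', px.2 x' hx']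
    · intro x hx px
      constructor
      · intro m hm
        rcases px.1 m hm with ⟨h1, h2⟩ | ⟨h1, h2⟩
        · refine Or.inl ⟨?_, ?_⟩
          · have : x⁻¹ (x m) = m := x.symm_apply_apply m; rwa [h1] at this
          · have : x⁻¹ (x (m + 1)) = m + 1 := x.symm_apply_apply (m + 1); rwa [h2] at this
        · refine Or.inr ⟨?_, ?_⟩
          · have : x⁻¹ (x (m + 1)) = m + 1 := x.symm_apply_apply (m + 1); rwa [h2] at this
          · have : x⁻¹ (x m) = m := x.symm_apply_apply m; rwa [h1] at this
      · intro x' hx'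
        have : x⁻¹ (x x') = x' := x.symm_apply_apply x'
        rwa [px.2 x' hx'] at this
  -- the three group-theoretic conclusions
  refine ⟨gap, ?_, ?_, ?_⟩
  · -- involutions
    intro h hh
    obtain ⟨P, Q⟩ := struct h hh
    apply Equiv.ext
    intro x
    simp only [Equiv.Perm.mul_apply, Equiv.Perm.one_apply]
    by_cases hx : ∀ m ∈ M, x ≠ m ∧ x ≠ m + 1
    · rw [Q x hx, Q x hx]
    · push_neg at hx
      obtain ⟨m, hm, hxm⟩ := hx
      have hcase : x = m ∨ x = m + 1 := by
        by_cases h' : x = m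
        · exact Or.inl h'
        · exact Or.inr (hxm h')
      rcases P m hm with ⟨h1, h2⟩ | ⟨h1, h2⟩ <;> rcases hcase with rfl | rfl <;>
        simp [h1, h2]
  · -- commutativity
    intro g hg h hh
    obtain ⟨Pg, Qg⟩ := struct g hg
    obtain ⟨Ph, Qh⟩ := struct h hh
    apply Equiv.ext
    intro x
    simp only [Equiv.Perm.mul_apply]
    by_cases hx : ∀ m ∈ M, x ≠ m ∧ x ≠ m + 1
    · simp only [Qh x hx, Qg x hx]
    · push_neg at hx
      obtain ⟨m, hm, hxm⟩ := hx
      have hcase : x = m ∨ x = m + 1 := by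
        by_cases h' : x = m
        · exact Or.inl h'
        · exact Or.inr (hxm h')
      rcases Pg m hm with ⟨g1, g2⟩ | ⟨g1, g2⟩ <;> rcases Ph m hm with ⟨h1, h2⟩ | ⟨h1, h2⟩ <;>
        rcases hcase with rfl | rfl <;> simp [g1, g2, h1, h2]
  · -- cardinality
    have hMfin : M.Finite := by
      apply Set.Finite.subset (Set.finite_Iio (a + b))
      intro x hx
      rw [hM] at hx
      obtain ⟨h1, -⟩ := hx
      exact Set.mem_Iio.mpr (by omega)
    haveI : Finite ↥M := hMfin
    -- the bijection H ≃ (M → Bool)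
    set F : ↥H → (↥M → Bool) :=
      fun h m => decide ((h : Equiv.Perm ℕ) (m : ℕ) = (m : ℕ) + 1) with hF
    have Finj : Function.Injective F := by
      intro g h heq
      obtain ⟨Pg, Qg⟩ := struct g g.2
      obtain ⟨Ph, Qh⟩ := struct h h.2
      apply Subtype.ext
      apply Equiv.ext
      intro x
      by_cases hx : ∀ m ∈ M, x ≠ m ∧ x ≠ m + 1
      · rw [Qg x hx, Qh x hx]
      · push_neg at hx
        obtain ⟨m, hm, hxm⟩ := hx
        have hcase : x = m ∨ x = m + 1 := by
          by_cases h' : x = m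
          · exact Or.inl h'
          · exact Or.inr (hxm h')
        have hiff : ((g : Equiv.Perm ℕ) m = m + 1) ↔ ((h : Equiv.Perm ℕ) m = m + 1) := by
          have := congrFun heq ⟨m, hm⟩
          simpa [hF, decide_eq_decide] using this
        rcases Pg m hm with ⟨g1, g2⟩ | ⟨g1, g2⟩ <;> rcases Ph m hm with ⟨h1, h2⟩ | ⟨h1, h2⟩
        · rcases hcase with rfl | rfl
          · rw [g1, h1]
          · rw [g2, h2]
        · exfalso; have := hiff.mpr h1; rw [g1] at this; omega
        · exfalso; have := hiff.mp g1; rw [h1] at this; omega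
        · rcases hcase with rfl | rfl
          · rw [g1, h1]
          · rw [g2, h2]
    -- existence of elements of H with prescribed behaviour
    have exist : ∀ S : Finset ℕ, ↑S ⊆ M → ∀ c : ℕ → Bool,
        ∃ h : Equiv.Perm ℕ, h ∈ H ∧
          (∀ m ∈ S, (c m = true → h m = m + 1 ∧ h (m + 1) = m) ∧
            (c m = false → h m = m ∧ h (m + 1) = m + 1)) ∧
          (∀ x, (∀ m ∈ S, x ≠ m ∧ x ≠ m + 1) → h x = x) := by
      intro S
      induction S using Finset.induction_on with
      | empty =>
        intro _ c
        exact ⟨1, one_mem _, by simp, fun x _ => rfl⟩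
      | @insert m₀ S' hm₀S' IH =>
        intro hsub c
        have hm₀M : m₀ ∈ M := hsub (Finset.mem_insert_self _ _)
        have hS'sub : ↑S' ⊆ M := fun x hx => hsub (Finset.mem_insert_of_mem hx)
        obtain ⟨h, hhH, hprop, hout⟩ := IH hS'sub c
        set w : Equiv.Perm ℕ := if c m₀ then Equiv.swap m₀ (m₀ + 1) else 1 with hw
        have hwH : w ∈ H := by
          by_cases hc : c m₀
          · rw [hw, if_pos hc, hH]
            exact Subgroup.subset_closure ⟨m₀, hm₀M, rfl⟩
          · rw [hw, if_neg hc]; exact one_mem _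
        have hwfix : ∀ y, y ≠ m₀ → y ≠ m₀ + 1 → w y = y := by
          intro y hy1 hy2
          by_cases hc : c m₀
          · rw [hw, if_pos hc]; exact Equiv.swap_apply_of_ne_of_ne hy1 hy2
          · rw [hw, if_neg hc]; rfl
        have hS'ne : ∀ m ∈ S', m₀ ≠ m ∧ m₀ ≠ m + 1 ∧ m₀ + 1 ≠ m ∧ m₀ + 1 ≠ m + 1 := by
          intro m hmS'
          have hmM : m ∈ M := hS'sub hmS'
          have hne : m₀ ≠ m := fun hc => hm₀S' (hc ▸ hmS')
          obtain ⟨d1, d2, d3, d4⟩ := disj m₀ hm₀M m hmM hne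
          exact ⟨d1, d2, d3, d4⟩
        have hfix0 : h m₀ = m₀ := hout m₀ (fun m hmS' => ⟨(hS'ne m hmS').1, (hS'ne m hmS').2.1⟩)
        have hfix1 : h (m₀ + 1) = m₀ + 1 :=
          hout (m₀ + 1) (fun m hmS' => ⟨(hS'ne m hmS').2.2.1, (hS'ne m hmS').2.2.2⟩)
        refine ⟨w * h, mul_mem hwH hhH, ?_, ?_⟩
        · intro m hm
          rcases Finset.mem_insert.mp hm with rfl | hmS'
          · constructor
            · intro hc
              constructor
              · simp [Equiv.Perm.mul_apply, hfix0, hw, hc, Equiv.swap_apply_left]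
              · simp [Equiv.Perm.mul_apply, hfix1, hw, hc, Equiv.swap_apply_right]
            · intro hc
              have hc' : ¬ c m = true := by simp [hc]
              constructor
              · simp [Equiv.Perm.mul_apply, hfix0, hw, hc']
              · simp [Equiv.Perm.mul_apply, hfix1, hw, hc']
          · obtain ⟨d1, d2, d3, d4⟩ := hS'ne m hmS'
            constructor
            · intro hc
              obtain ⟨e1, e2⟩ := (hprop m hmS').1 hc
              constructor
              · rw [Equiv.Perm.mul_apply, e1, hwfix _ (Ne.symm d2) (Ne.symm d4)]
              · rw [Equiv.Perm.mul_apply, e2, hwfix _ (Ne.symm d1) (Ne.symm d3)]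
            · intro hc
              obtain ⟨e1, e2⟩ := (hprop m hmS').2 hc
              constructor
              · rw [Equiv.Perm.mul_apply, e1, hwfix _ (Ne.symm d1) (Ne.symm d3)]
              · rw [Equiv.Perm.mul_apply, e2, hwfix _ (Ne.symm d2) (Ne.symm d4)]
        · intro x hx
          have hxS' : ∀ m ∈ S', x ≠ m ∧ x ≠ m + 1 :=
            fun m hmS' => hx m (Finset.mem_insert_of_mem hmS')
          obtain ⟨hx1, hx2⟩ := hx m₀ (Finset.mem_insert_self _ _)
          rw [Equiv.Perm.mul_apply, hout x hxS', hwfix x hx1 hx2]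
    have Fsurj : Function.Surjective F := by
      classical
      intro c
      set c' : ℕ → Bool := fun n => if hn : n ∈ M then c ⟨n, hn⟩ else false with hc'
      obtain ⟨h, hhH, hprop, hout⟩ := exist hMfin.toFinset (by simp) c'
      refine ⟨⟨h, hhH⟩, ?_⟩
      funext m
      have hmS : (m : ℕ) ∈ hMfin.toFinset := hMfin.mem_toFinset.mpr m.2
      have hc'm : c' (m : ℕ) = c m := by
        rw [hc']; simp only [dif_pos m.2]
      rw [hF]
      cases hcm : c m with
      | false =>
        obtain ⟨e1, _⟩ := (hprop m hmS).2 (by rw [hc'm, hcm])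
        simp only [e1]
        simp
      | true =>
        obtain ⟨e1, _⟩ := (hprop m hmS).1 (by rw [hc'm, hcm])
        simp only [e1]
        simp
    rw [Nat.card_eq_of_bijective F ⟨Finj, Fsurj⟩, Nat.card_fun,
      Nat.card_coe_set_eq]
    simp
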